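/- Consider the PID-controlled pendulum: trajectories θ, ω, u_I : ℝ → ℝ satisfying θ'(t) = ω(t), ω'(t) = b·ω(t) − w·sin(θ(t)) + u(t) with u(t) = −(k_P/2)·sin(θ(t) − θ_t) − k_D ω(t) + k_I u_I(t), and u_I'(t) = −(k_P/2)·sin(θ(t) − θ_t) − k_D ω(t), where θ_t ∈ ℝ is the target angle, w > 0, and b, k_P, k_D, k_I are real gains with k_P > 0, k_I > w, k_I + b > 0, and, setting β = 1/(k_P(b + k_I)k_I), k_D > b + k_I + β k_P w / 2. Then every such trajectory defined on [0,∞) satisfies: ω(t) → 0, k_I u_I(t) − w·sin(θ(t)) → 0, and sin(θ(t) − θ_t) → 0 as t → ∞; equivalently, the distance of θ(t) modulo 2π to the set {θ_t, θ_t + π} tends to 0. -/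

import Mathlib

open Real Filter MeasureTheory intervalIntegral

lemma antitoneOn_Ici_of_hasDerivAt {f f' : ℝ → ℝ}
    (h : ∀ t ∈ Set.Ici (0:ℝ), HasDerivAt f (f' t) t)
    (h' : ∀ t ∈ Set.Ici (0:ℝ), f' t ≤ 0) :
    AntitoneOn f (Set.Ici (0:ℝ)) := by
  apply antitoneOn_of_hasDerivWithinAt_nonpos (convex_Ici 0)
  · exact fun t ht => (h t ht).continuousAt.continuousWithinAt
  · intro x hx
    rw [interior_Ici] at hx
    exact (h x (Set.mem_Ici.mpr (le_of_lt (Set.mem_Ioi.mp hx)))).hasDerivWithinAt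
  · intro x hx
    rw [interior_Ici] at hx
    exact h' x (Set.mem_Ici.mpr (le_of_lt (Set.mem_Ioi.mp hx)))


lemma barbalat {g : ℝ → ℝ} {L M : ℝ} (hL : 0 < L)
    (hg0 : ∀ t ∈ Set.Ici (0:ℝ), 0 ≤ g t)
    (hcont : ContinuousOn g (Set.Ici (0:ℝ)))
    (hlip : ∀ a ∈ Set.Ici (0:ℝ), ∀ c ∈ Set.Ici (0:ℝ), |g c - g a| ≤ L * |c - a|)
    (hint : ∀ T, 0 ≤ T → (∫ u in (0:ℝ)..T, g u) ≤ M) :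
    Tendsto g atTop (nhds 0) := by
  have h00 : (0:ℝ) ∈ Set.Ici (0:ℝ) := Set.self_mem_Ici
  have hii : ∀ a ∈ Set.Ici (0:ℝ), ∀ c ∈ Set.Ici (0:ℝ), a ≤ c →
      IntervalIntegrable g volume a c := by
    intro a ha c hc hac
    apply ContinuousOn.intervalIntegrable
    apply hcont.mono
    rw [Set.uIcc_of_le hac]
    exact fun x hx => le_trans ha hx.1
  set H : ℝ → ℝ := fun T => ∫ u in (0:ℝ)..(max T 0), g u with hH
  have hHeq : ∀ T, 0 ≤ T → H T = ∫ u in (0:ℝ)..T, g u := by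
    intro T hT; simp [hH, max_eq_left hT]
  have hsplit : ∀ a, 0 ≤ a → ∀ c, a ≤ c →
      (∫ u in (0:ℝ)..c, g u) = (∫ u in (0:ℝ)..a, g u) + ∫ u in a..c, g u := by
    intro a ha c hac
    exact (integral_add_adjacent_intervals
      (hii 0 h00 a ha ha) (hii a ha c (le_trans ha hac) hac)).symm
  have hmono : Monotone H := by
    intro a c hac
    have h1 : (0:ℝ) ≤ max a 0 := le_max_right _ _
    have h2 : max a 0 ≤ max c 0 := max_le_max hac le_rfl
    have hs := hsplit (max a 0) h1 (max c 0) h2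
    have hpos : 0 ≤ ∫ u in (max a 0)..(max c 0), g u := by
      apply intervalIntegral.integral_nonneg h2
      intro u hu
      exact hg0 u (le_trans h1 hu.1)
    have ea : H a = ∫ u in (0:ℝ)..(max a 0), g u := rfl
    have ec : H c = ∫ u in (0:ℝ)..(max c 0), g u := rfl
    rw [ea, ec, hs]
    linarith
  have hbdd : BddAbove (Set.range H) := by
    refine ⟨M, ?_⟩
    rintro x ⟨T, rfl⟩
    exact hint (max T 0) (le_max_right _ _)
  have htendH : Tendsto H atTop (nhds (⨆ T, H T)) := tendsto_atTop_ciSup hmono hbdd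
  set l := ⨆ T, H T with hl
  have hHle : ∀ T, H T ≤ l := fun T => le_ciSup hbdd T
  rw [Metric.tendsto_atTop]
  intro ε hε
  set δ := ε / (2 * L) with hδ
  have hδpos : 0 < δ := by positivity
  have hLδ : L * δ = ε / 2 := by rw [hδ]; field_simp
  set η := ε * δ / 2 with hη
  have hηpos : 0 < η := by positivity
  obtain ⟨N₀, hN₀⟩ := (Metric.tendsto_atTop.mp htendH) η hηpos
  refine ⟨max N₀ 0, fun t ht => ?_⟩
  have ht0 : (0:ℝ) ≤ t := le_trans (le_max_right _ _) ht
  have htN : N₀ ≤ t := le_trans (le_max_left _ _) ht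
  have hgt0 : 0 ≤ g t := hg0 t ht0
  rw [Real.dist_eq, sub_zero, abs_of_nonneg hgt0]
  by_contra hcon
  push_neg at hcon
  have hlow : ∀ u ∈ Set.Icc t (t + δ), ε / 2 ≤ g u := by
    intro u hu
    have hu0 : (0:ℝ) ≤ u := le_trans ht0 hu.1
    have habs : |g u - g t| ≤ L * |u - t| := hlip t ht0 u hu0
    have h1 : g t - g u ≤ |g u - g t| := by rw [abs_sub_comm]; exact le_abs_self _
    have h2 : |u - t| = u - t := abs_of_nonneg (by linarith [hu.1])
    rw [h2] at habs
    have hut : u - t ≤ δ := by linarith [hu.2]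
    have h3 : L * (u - t) ≤ L * δ := mul_le_mul_of_nonneg_left hut hL.le
    linarith
  have hint1 : δ * (ε / 2) ≤ ∫ u in t..(t+δ), g u := by
    have htδ0 : (0:ℝ) ≤ t + δ := by linarith
    have htδ : t ≤ t + δ := by linarith
    have h1 : (∫ u in t..(t+δ), (ε/2 : ℝ)) ≤ ∫ u in t..(t+δ), g u :=
      intervalIntegral.integral_mono_on htδ
        intervalIntegrable_const (hii t ht0 (t+δ) htδ0 htδ) hlow
    rw [intervalIntegral.integral_const, smul_eq_mul] at h1
    calc δ * (ε/2) = (t + δ - t) * (ε/2) := by ring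
    _ ≤ _ := h1
  have hHt : H (t + δ) - H t = ∫ u in t..(t+δ), g u := by
    rw [hHeq t ht0, hHeq (t+δ) (by linarith),
      hsplit t ht0 (t+δ) (by linarith)]
    ring
  have hclose : l - H t < η := by
    have h4 := hN₀ t htN
    rw [Real.dist_eq] at h4
    have h5 := abs_lt.mp h4
    linarith [h5.1, h5.2]
  have h6 : H (t + δ) ≤ l := hHle _
  have h7 : δ * (ε/2) ≤ l - H t := by linarith
  rw [hη] at hclose
  linarith


set_option maxHeartbeats 2000000 in
lemma lyap_ineq (w kP kI BK q ε γ A c : ℝ) (S C Cθ O P : ℝ)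
    (hw : 0 < w) (hkP : 0 < kP) (hwkI : w ≤ kI) (hBK : 0 < BK)
    (hε : 0 < ε) (hεkP : ε ≤ kP/(4*BK))
    (hq : w/(2*BK*kI) + 3*ε ≤ q)
    (hγ : γ = 1/(kI*BK)) (hA : A = kP + 2*ε*q)
    (hc : c = min (2*ε) (min (ε*kP/4) (1/(4*BK))))
    (hC : C ≤ 1) (hCθ : |Cθ| ≤ 1) :
    A*(S*O/2) + O*(-q*O - kP/2*S + P) + γ*(P*(-((w*Cθ + kI*BK)*O) - kI*P))
      + ε*(C*O^2 + S*(-q*O - kP/2*S + P)) ≤ -c*(O^2+S^2+P^2) := by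
  have hkI0 : 0 < kI := lt_of_lt_of_le hw hwkI
  have hne : kI*BK ≠ 0 := by positivity
  have hLHS : A*(S*O/2) + O*(-q*O - kP/2*S + P) + γ*(P*(-((w*Cθ + kI*BK)*O) - kI*P))
      + ε*(C*O^2 + S*(-q*O - kP/2*S + P))
      = -q*O^2 + ε*C*O^2 - (ε*kP/2)*S^2 - (1/BK)*P^2
        - (w/(kI*BK))*Cθ*(P*O) + ε*(S*P) := by
    rw [hγ, hA]; field_simp; ring
  rw [hLHS]
  have hw2 : w^2/(2*kI^2*BK) ≤ w/(2*BK*kI) := by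
    rw [div_le_div_iff₀ (by positivity) (by positivity)]
    nlinarith [mul_le_mul_of_nonneg_left hwkI (by positivity : (0:ℝ) ≤ 2*w*BK*kI)]
  have hCθ1 : -1 ≤ Cθ := (abs_le.mp hCθ).1
  have hCθ2 : Cθ ≤ 1 := (abs_le.mp hCθ).2
  have hO2 : (0:ℝ) ≤ O^2 := sq_nonneg O
  have ha : 0 < w/(kI*BK) := by positivity
  have hC1 : -((w/(kI*BK))*Cθ*(P*O)) ≤ (1/(2*BK))*P^2 + (w/(2*BK*kI))*O^2 := by
    have k1 : 0 ≤ (1/(2*BK)) * (P + (w/kI)*O)^2 := by positivity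
    have k2 : 0 ≤ (1/(2*BK)) * (P - (w/kI)*O)^2 := by positivity
    have e1 : (1/(2*BK)) * (P + (w/kI)*O)^2
        = (1/(2*BK))*P^2 + (w/(kI*BK))*(P*O) + (w^2/(2*kI^2*BK))*O^2 := by
      field_simp; ring
    have e2 : (1/(2*BK)) * (P - (w/kI)*O)^2
        = (1/(2*BK))*P^2 - (w/(kI*BK))*(P*O) + (w^2/(2*kI^2*BK))*O^2 := by
      field_simp; ring
    have hw2O : (w^2/(2*kI^2*BK))*O^2 ≤ (w/(2*BK*kI))*O^2 :=
      mul_le_mul_of_nonneg_right hw2 hO2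
    rcases le_or_gt 0 (P*O) with hPO | hPO
    · have hp1 : 0 ≤ (w/(kI*BK)) * ((P*O) * (1 + Cθ)) :=
        mul_nonneg ha.le (mul_nonneg hPO (by linarith))
      nlinarith [k2, e2, hw2O]
    · have hp1 : 0 ≤ (w/(kI*BK)) * ((P*O) * (Cθ - 1)) :=
        mul_nonneg ha.le (by nlinarith)
      nlinarith [k1, e1, hw2O]
  have h6 : ε^2*BK ≤ ε*kP/4 := by
    have h := mul_le_mul_of_nonneg_left hεkP (by positivity : (0:ℝ) ≤ ε*BK)
    have h2 : ε*BK*(kP/(4*BK)) = ε*kP/4 := by field_simp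
    nlinarith [h]
  have hC2 : ε*(S*P) ≤ (1/(4*BK))*P^2 + (ε*kP/4)*S^2 := by
    have k3 : 0 ≤ (1/(4*BK)) * (P - 2*ε*BK*S)^2 := by positivity
    have e3 : (1/(4*BK)) * (P - 2*ε*BK*S)^2
        = (1/(4*BK))*P^2 - ε*(S*P) + (ε^2*BK)*S^2 := by
      field_simp; ring
    nlinarith [mul_le_mul_of_nonneg_right h6 (sq_nonneg S)]
  have hC3 : ε*C*O^2 ≤ ε*O^2 := by
    nlinarith [mul_nonneg (mul_nonneg hε.le (by linarith : (0:ℝ) ≤ 1 - C)) hO2]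
  have hc1 : c ≤ 2*ε := hc ▸ min_le_left _ _
  have hc2 : c ≤ ε*kP/4 := hc ▸ le_trans (min_le_right _ _) (min_le_left _ _)
  have hc3 : c ≤ 1/(4*BK) := hc ▸ le_trans (min_le_right _ _) (min_le_right _ _)
  have f1 : 0 ≤ 2*(ε*O^2) - c*O^2 := by
    have := mul_nonneg (by linarith : (0:ℝ) ≤ 2*ε - c) hO2
    nlinarith [this]
  have f2 : 0 ≤ (ε*kP/4)*S^2 - c*S^2 := by
    have := mul_nonneg (by linarith : (0:ℝ) ≤ ε*kP/4 - c) (sq_nonneg S)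
    nlinarith [this]
  have f3 : 0 ≤ (1/(4*BK))*P^2 - c*P^2 := by
    have := mul_nonneg (by linarith : (0:ℝ) ≤ 1/(4*BK) - c) (sq_nonneg P)
    nlinarith [this]
  have f4 : 0 ≤ q*O^2 - (w/(2*BK*kI))*O^2 - 3*(ε*O^2) := by
    have := mul_nonneg (by linarith : (0:ℝ) ≤ q - (w/(2*BK*kI) + 3*ε)) hO2
    nlinarith [this]
  have eq1 : (1/BK)*P^2 = (1/(2*BK))*P^2 + (1/(4*BK))*P^2 + (1/(4*BK))*P^2 := by
    field_simp; ring
  have eq2 : ε*kP/2*S^2 = ε*kP/4*S^2 + (ε*kP/4)*S^2 := by ring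
  have eq3 : w/(kI*BK)*Cθ*(P*O) = (w/(kI*BK))*Cθ*(P*O) := rfl
  linarith [hC1, hC2, hC3, f1, f2, f3, f4, eq1, eq2]



set_option maxHeartbeats 3200000 in
/-- PID stabilization of the nonlinear pendulum at an arbitrary
target angle `θt`, despite the (a priori unknown) gravitational term
`−w sin θ` treated as a state-dependent bias. -/
theorem pendulum_pid_convergence
    (b w kP kD kI β θt : ℝ)
    (hw : 0 < w) (hkP : 0 < kP) (hkI : w < kI) (hbkI : 0 < kI + b)
    (hβ : β = 1 / (kP * (b + kI) * kI))
    (hkD : kD > b + kI + β * kP * w / 2)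
    (θ ω uI : ℝ → ℝ)
    (u : ℝ → ℝ)
    (hu : ∀ t, u t = -(kP / 2) * Real.sin (θ t - θt) - kD * ω t + kI * uI t)
    (hθ : ∀ t ∈ Set.Ici (0 : ℝ), HasDerivAt θ (ω t) t)
    (hω : ∀ t ∈ Set.Ici (0 : ℝ),
      HasDerivAt ω (b * ω t - w * Real.sin (θ t) + u t) t)
    (huI : ∀ t ∈ Set.Ici (0 : ℝ),
      HasDerivAt uI (-(kP / 2) * Real.sin (θ t - θt) - kD * ω t) t) :
    Tendsto ω atTop (nhds 0) ∧
    Tendsto (fun t => kI * uI t - w * Real.sin (θ t)) atTop (nhds 0) ∧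
    Tendsto (fun t => Real.sin (θ t - θt)) atTop (nhds 0) := by
  have hBK : 0 < b + kI := by linarith
  have hkI0 : 0 < kI := lt_trans hw hkI
  set z := w/(2*(b+kI)*kI) with hzdef
  clear_value z
  have hz0 : 0 < z := by rw [hzdef]; exact div_pos hw (by nlinarith [mul_pos hBK hkI0])
  have hδ0 : β*kP*w/2 = z := by rw [hβ, hzdef]; field_simp
  set q := kD - b - kI with hqdef
  clear_value q
  have hq0 : z < q := by rw [← hδ0, hqdef]; linarith
  have hqpos : 0 < q := lt_trans hz0 hq0
  set ε := min (min ((q - z)/3) (kP/(4*(b+kI)))) (min (kP/2) (1/2)) with hεdef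
  have hε : 0 < ε := by
    rw [hεdef]
    exact lt_min (lt_min (by linarith) (div_pos hkP (by linarith))) (lt_min (by linarith) (by norm_num))
  have hε1 : ε ≤ (q - z)/3 := by
    rw [hεdef]; exact le_trans (min_le_left _ _) (min_le_left _ _)
  have hεkP : ε ≤ kP/(4*(b+kI)) := by
    rw [hεdef]; exact le_trans (min_le_left _ _) (min_le_right _ _)
  have hε2 : ε ≤ kP/2 := by
    rw [hεdef]; exact le_trans (min_le_right _ _) (min_le_left _ _)
  have hε3 : ε ≤ 1/2 := by
    rw [hεdef]; exact le_trans (min_le_right _ _) (min_le_right _ _)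
  clear_value ε
  have hεq : z + 3*ε ≤ q := by linarith
  set γ := 1/(kI*(b+kI)) with hγdef
  clear_value γ
  have hγ0 : 0 < γ := by rw [hγdef]; exact one_div_pos.mpr (mul_pos hkI0 hBK)
  set A := kP + 2*ε*q with hAdef
  clear_value A
  have hA0 : 0 < A := by rw [hAdef]; linarith [mul_pos hε hqpos]
  have hA2 : 2*ε ≤ A := by rw [hAdef]; linarith [mul_nonneg hε.le hqpos.le]
  set c := min (2*ε) (min (ε*kP/4) (1/(4*(b+kI)))) with hcdef
  have hc : 0 < c := by
    rw [hcdef]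
    refine lt_min (by linarith) (lt_min ?_ ?_)
    · linarith [mul_pos hε hkP]
    · have : (0:ℝ) < 4*(b+kI) := by linarith
      exact one_div_pos.mpr this
  clear_value c
  -- functions
  set p : ℝ → ℝ := fun t => (kI * uI t - w * Real.sin (θ t)) - kI * ω t with hpdef
  clear_value p
  set V : ℝ → ℝ := fun t => A * Real.sin ((θ t - θt)/2)^2 + ω t^2/2 + γ/2 * p t^2
    + ε * (Real.sin (θ t - θt) * ω t) with hVdef
  clear_value V
  set g : ℝ → ℝ := fun t => ω t^2 + Real.sin (θ t - θt)^2 + p t^2 with hgdef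
  clear_value g
  set Vd : ℝ → ℝ := fun t =>
    A * (Real.sin (θ t - θt) * ω t / 2)
    + ω t * (-q * ω t - kP/2 * Real.sin (θ t - θt) + p t)
    + γ * (p t * (-((w * Real.cos (θ t) + kI*(b+kI)) * ω t) - kI * p t))
    + ε * (Real.cos (θ t - θt) * ω t^2
        + Real.sin (θ t - θt) * (-q * ω t - kP/2 * Real.sin (θ t - θt) + p t)) with hVddef
  clear_value Vd
  -- derivative facts
  have hωd : ∀ t ∈ Set.Ici (0:ℝ),
      HasDerivAt ω (-q * ω t - kP/2 * Real.sin (θ t - θt) + p t) t := by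
    intro t ht
    have h := hω t ht
    convert h using 1
    rw [hu t]; simp only [hpdef, hqdef]; ring
  have hpd : ∀ t ∈ Set.Ici (0:ℝ),
      HasDerivAt p (-((w * Real.cos (θ t) + kI*(b+kI)) * ω t) - kI * p t) t := by
    intro t ht
    have hpt : ∀ s, p s = kI * uI s - w * Real.sin (θ s) - kI * ω s := by
      intro s; rw [hpdef]
    have hωd' := hωd t ht
    rw [hpt t] at hωd'
    have h1 : HasDerivAt (fun s => kI * uI s - w * Real.sin (θ s) - kI * ω s)
        (kI * (-(kP / 2) * Real.sin (θ t - θt) - kD * ω t)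
          - (w * (Real.cos (θ t) * ω t))
          - kI * (-q * ω t - kP/2 * Real.sin (θ t - θt)
              + (kI * uI t - w * Real.sin (θ t) - kI * ω t))) t :=
      (((huI t ht).const_mul kI).sub (((hθ t ht).sin).const_mul w)).sub
        (hωd'.const_mul kI)
    rw [hpt t, hpdef]
    convert h1 using 1
    simp only [hqdef]; ring
  have hsd : ∀ t ∈ Set.Ici (0:ℝ),
      HasDerivAt (fun t => Real.sin (θ t - θt)) (Real.cos (θ t - θt) * ω t) t := by
    intro t ht
    exact ((hθ t ht).sub_const θt).sin
  have hVd : ∀ t ∈ Set.Ici (0:ℝ), HasDerivAt V (Vd t) t := by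
    intro t ht
    have hφ : HasDerivAt (fun t => Real.sin ((θ t - θt)/2)^2)
        ((2:ℕ) * Real.sin ((θ t - θt)/2)^1 * (Real.cos ((θ t - θt)/2) * (ω t / 2))) t := by
      have h1 : HasDerivAt (fun t => (θ t - θt)/2) (ω t / 2) t :=
        ((hθ t ht).sub_const θt).div_const 2
      exact (h1.sin).pow 2
    have hV1 := hφ.const_mul A
    have hV2 := ((hωd t ht).pow 2).div_const 2
    have hV3 := ((hpd t ht).pow 2).const_mul (γ/2)
    have hV4 := ((hsd t ht).mul (hωd t ht)).const_mul ε
    have htot := ((hV1.add hV2).add hV3).add hV4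
    rw [hVdef]
    refine htot.congr_deriv ?_
    have hdouble : Real.sin (θ t - θt)
        = 2 * Real.sin ((θ t - θt)/2) * Real.cos ((θ t - θt)/2) := by
      rw [← Real.sin_two_mul]; ring_nf
    simp only [hVddef]
    rw [hdouble]
    push_cast
    ring
  -- key Lyapunov decrease
  have hεq' : w/(2*(b+kI)*kI) + 3*ε ≤ q := by rw [← hzdef]; exact hεq
  have key : ∀ t ∈ Set.Ici (0:ℝ), Vd t ≤ -c * g t := by
    intro t ht
    have h := lyap_ineq w kP kI (b+kI) q ε γ A c
      (Real.sin (θ t - θt)) (Real.cos (θ t - θt)) (Real.cos (θ t)) (ω t) (p t)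
      hw hkP hkI.le hBK hε hεkP hεq' hγdef hAdef hcdef
      (Real.cos_le_one _) (Real.abs_cos_le_one _)
    simp only [hVddef, hgdef]
    convert h using 1
  have hgnn : ∀ t, 0 ≤ g t := by
    intro t; simp only [hgdef]; positivity
  have hVdnp : ∀ t ∈ Set.Ici (0:ℝ), Vd t ≤ 0 := by
    intro t ht
    have h1 := key t ht
    have h2 := mul_nonneg hc.le (hgnn t)
    linarith
  have hVanti : AntitoneOn V (Set.Ici (0:ℝ)) := antitoneOn_Ici_of_hasDerivAt hVd hVdnp
  -- V lower bound
  have hVge : ∀ t, (1/4) * ω t^2 + γ/2 * p t^2 ≤ V t := by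
    intro t
    have hd : Real.sin (θ t - θt)
        = 2 * Real.sin ((θ t - θt)/2) * Real.cos ((θ t - θt)/2) := by
      rw [← Real.sin_two_mul]; ring_nf
    simp only [hVdef]
    rw [hd]
    set x := Real.sin ((θ t - θt)/2)
    set y := Real.cos ((θ t - θt)/2)
    have hy1 : y^2 ≤ 1 := Real.cos_sq_le_one _
    nlinarith [mul_nonneg (mul_nonneg hε.le (sq_nonneg (ω t))) (by linarith : (0:ℝ) ≤ 1 - y^2),
      mul_nonneg hε.le (sq_nonneg (x + ω t * y / 2)),
      mul_nonneg (by linarith : (0:ℝ) ≤ A - 2*ε) (sq_nonneg x),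
      mul_nonneg (mul_nonneg (by linarith : (0:ℝ) ≤ 1/4 - ε/2) (sq_nonneg (ω t))) (sq_nonneg y)]
  have hVnn : ∀ t, 0 ≤ V t := by
    intro t
    have h1 := hVge t
    linarith [sq_nonneg (ω t), mul_nonneg hγ0.le (sq_nonneg (p t))]
  have hVb : ∀ t ∈ Set.Ici (0:ℝ), V t ≤ V 0 := by
    intro t ht
    exact hVanti Set.self_mem_Ici ht ht
  have hωb : ∀ t ∈ Set.Ici (0:ℝ), ω t^2 ≤ 4*(V 0) := by
    intro t ht
    have h1 := hVge t
    have h2 := hVb t ht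
    linarith [mul_nonneg hγ0.le (sq_nonneg (p t))]
  have hpb : ∀ t ∈ Set.Ici (0:ℝ), p t^2 ≤ 2*(V 0)/γ := by
    intro t ht
    have h1 := hVge t
    have h2 := hVb t ht
    have h4 : γ/2 * p t^2 ≤ V 0 := by linarith [sq_nonneg (ω t)]
    rw [le_div_iff₀ hγ0]
    have h5 : p t^2 * γ = 2*(γ/2 * p t^2) := by ring
    linarith [h4]
  set K1 := Real.sqrt (4*(V 0)) with hK1def
  set K2 := Real.sqrt (2*(V 0)/γ) with hK2def
  have hK1nn : 0 ≤ K1 := by rw [hK1def]; exact Real.sqrt_nonneg _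
  have hK2nn : 0 ≤ K2 := by rw [hK2def]; exact Real.sqrt_nonneg _
  have hωK : ∀ t ∈ Set.Ici (0:ℝ), |ω t| ≤ K1 := by
    intro t ht
    rw [hK1def, ← Real.sqrt_sq_eq_abs]
    exact Real.sqrt_le_sqrt (hωb t ht)
  have hpK : ∀ t ∈ Set.Ici (0:ℝ), |p t| ≤ K2 := by
    intro t ht
    rw [hK2def, ← Real.sqrt_sq_eq_abs]
    exact Real.sqrt_le_sqrt (hpb t ht)
  clear_value K1 K2
  -- derivative of g and its bound
  set gdv : ℝ → ℝ := fun t =>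
    2*(ω t*(-q * ω t - kP/2 * Real.sin (θ t - θt) + p t))
    + 2*(Real.sin (θ t - θt)*(Real.cos (θ t - θt) * ω t))
    + 2*(p t*(-((w * Real.cos (θ t) + kI*(b+kI)) * ω t) - kI * p t)) with hgdvdef
  clear_value gdv
  have hgd : ∀ t ∈ Set.Ici (0:ℝ), HasDerivAt g (gdv t) t := by
    intro t ht
    have h2 : HasDerivAt (fun t => ω t^2 + Real.sin (θ t - θt)^2 + p t^2)
        ((2:ℕ)*ω t^(2-1)*(-q * ω t - kP/2 * Real.sin (θ t - θt) + p t)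
          + (2:ℕ)*Real.sin (θ t - θt)^(2-1)*(Real.cos (θ t - θt) * ω t)
          + (2:ℕ)*p t^(2-1)*(-((w * Real.cos (θ t) + kI*(b+kI)) * ω t) - kI * p t)) t :=
      (((hωd t ht).pow 2).add ((hsd t ht).pow 2)).add ((hpd t ht).pow 2)
    rw [hgdef]
    convert h2 using 1
    simp only [hgdvdef]
    push_cast
    norm_num
    ring
  set E1 := (abs q)*K1 + kP/2 + K2 with hE1def
  set E2 := (w + kI*(b+kI))*K1 + kI*K2 with hE2def
  have hE1nn : 0 ≤ E1 := by
    rw [hE1def]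
    have h1 : (0:ℝ) ≤ (abs q)*K1 := mul_nonneg (abs_nonneg _) hK1nn
    linarith [hK2nn, hkP.le]
  have hE2nn : 0 ≤ E2 := by
    rw [hE2def]
    have h1 : (0:ℝ) ≤ (w + kI*(b+kI)) := by nlinarith [mul_pos hkI0 hBK]
    have h2 : (0:ℝ) ≤ (w + kI*(b+kI))*K1 := mul_nonneg h1 hK1nn
    have h3 : (0:ℝ) ≤ kI*K2 := mul_nonneg hkI0.le hK2nn
    linarith
  clear_value E1 E2
  set L := 2*K1*E1 + 2*K1 + 2*K2*E2 + 1 with hLdef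
  have hL : 0 < L := by
    rw [hLdef]
    have h1 : (0:ℝ) ≤ 2*K1*E1 := mul_nonneg (by linarith) hE1nn
    have h2 : (0:ℝ) ≤ 2*K2*E2 := mul_nonneg (by linarith) hE2nn
    linarith
  clear_value L
  have habs_bound : ∀ t ∈ Set.Ici (0:ℝ), |gdv t| ≤ L := by
    intro t ht
    have hS : |Real.sin (θ t - θt)| ≤ 1 := Real.abs_sin_le_one _
    have hCt : |Real.cos (θ t - θt)| ≤ 1 := Real.abs_cos_le_one _
    have hCθ : |Real.cos (θ t)| ≤ 1 := Real.abs_cos_le_one _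
    have hO := hωK t ht
    have hP := hpK t ht
    have hOnn : (0:ℝ) ≤ |ω t| := abs_nonneg _
    have hPnn : (0:ℝ) ≤ |p t| := abs_nonneg _
    have h1 : |(-q * ω t - kP/2 * Real.sin (θ t - θt) + p t)| ≤ E1 := by
      calc |(-q * ω t - kP/2 * Real.sin (θ t - θt) + p t)|
          = |(-q * ω t) + (-(kP/2 * Real.sin (θ t - θt))) + p t| := by ring_nf
        _ ≤ |(-q * ω t)| + |(-(kP/2 * Real.sin (θ t - θt)))| + |p t| := abs_add_three _ _ _
        _ = (abs q)*|ω t| + kP/2*|Real.sin (θ t - θt)| + |p t| := by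
            rw [abs_neg, abs_mul, abs_mul, abs_neg, abs_of_pos (by linarith : (0:ℝ) < kP/2)]
        _ ≤ (abs q)*K1 + kP/2*1 + K2 := by
            gcongr <;> exact abs_nonneg _
        _ = E1 := by rw [hE1def]; ring
    have h2 : |Real.cos (θ t - θt) * ω t| ≤ K1 := by
      rw [abs_mul]
      calc |Real.cos (θ t - θt)| *|ω t| ≤ 1*K1 := by gcongr
        _ = K1 := one_mul _
    have h3 : |(-((w * Real.cos (θ t) + kI*(b+kI)) * ω t) - kI * p t)| ≤ E2 := by
      have h31 : |w * Real.cos (θ t) + kI*(b+kI)| ≤ w + kI*(b+kI) := by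
        calc |w * Real.cos (θ t) + kI*(b+kI)| ≤ |w * Real.cos (θ t)| + |kI*(b+kI)| :=
              abs_add_le _ _
          _ = w*|Real.cos (θ t)| + kI*(b+kI) := by
              rw [abs_mul, abs_of_pos hw, abs_of_pos (mul_pos hkI0 hBK)]
          _ ≤ w*1 + kI*(b+kI) := by gcongr
          _ = w + kI*(b+kI) := by ring
      calc |(-((w * Real.cos (θ t) + kI*(b+kI)) * ω t) - kI * p t)|
          = |(-((w * Real.cos (θ t) + kI*(b+kI)) * ω t)) + (-(kI * p t))| := by ring_nf
        _ ≤ |(-((w * Real.cos (θ t) + kI*(b+kI)) * ω t))| + |(-(kI * p t))| := abs_add_le _ _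
        _ = |w * Real.cos (θ t) + kI*(b+kI)| *|ω t| + kI*|p t| := by
            rw [abs_neg, abs_neg, abs_mul, abs_mul, abs_of_pos hkI0]
        _ ≤ (w + kI*(b+kI))*K1 + kI*K2 := by
            gcongr <;> first
              | exact abs_nonneg _
              | exact hkI0.le
        _ = E2 := by rw [hE2def]
    have t1 : |2*(ω t*(-q * ω t - kP/2 * Real.sin (θ t - θt) + p t))| ≤ 2*(K1*E1) := by
      rw [abs_mul, abs_two, abs_mul]
      have := mul_le_mul hO h1 (abs_nonneg _) hK1nn
      linarith
    have t2 : |2*(Real.sin (θ t - θt)*(Real.cos (θ t - θt) * ω t))| ≤ 2*(1*K1) := by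
      rw [abs_mul, abs_two, abs_mul]
      have := mul_le_mul hS h2 (abs_nonneg _) (by norm_num : (0:ℝ) ≤ 1)
      linarith
    have t3 : |2*(p t*(-((w * Real.cos (θ t) + kI*(b+kI)) * ω t) - kI * p t))| ≤ 2*(K2*E2) := by
      rw [abs_mul, abs_two, abs_mul]
      have := mul_le_mul hP h3 (abs_nonneg _) hK2nn
      linarith
    calc |gdv t| ≤ |2*(ω t*(-q * ω t - kP/2 * Real.sin (θ t - θt) + p t))|
          + |2*(Real.sin (θ t - θt)*(Real.cos (θ t - θt) * ω t))|
          + |2*(p t*(-((w * Real.cos (θ t) + kI*(b+kI)) * ω t) - kI * p t))| := by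
          rw [hgdvdef]
          exact abs_add_three _ _ _
      _ ≤ 2*(K1*E1) + 2*(1*K1) + 2*(K2*E2) := by linarith
      _ ≤ L := by rw [hLdef]; linarith
  -- Lipschitz property of g on [0,∞)
  have hlip1 : ∀ a ∈ Set.Ici (0:ℝ), ∀ t ∈ Set.Ici (0:ℝ), a ≤ t →
      g t - g a ≤ L*(t-a) ∧ g a - g t ≤ L*(t-a) := by
    intro a ha t ht hat
    constructor
    · have hanti : AntitoneOn (fun x => g x - L*x) (Set.Ici (0:ℝ)) := by
        apply antitoneOn_Ici_of_hasDerivAt (f' := fun x => gdv x - L)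
        · intro x hx
          have hid : HasDerivAt (fun y : ℝ => L*y) L x := by
            simpa using (hasDerivAt_id x).const_mul L
          exact (hgd x hx).sub hid
        · intro x hx
          have := abs_le.mp (habs_bound x hx)
          linarith [this.2]
      have := hanti ha ht hat
      simp only [] at this
      linarith
    · have hanti : AntitoneOn (fun x => -(g x) - L*x) (Set.Ici (0:ℝ)) := by
        apply antitoneOn_Ici_of_hasDerivAt (f' := fun x => -(gdv x) - L)
        · intro x hx
          have hid : HasDerivAt (fun y : ℝ => L*y) L x := by
            simpa using (hasDerivAt_id x).const_mul L
          exact ((hgd x hx).neg).sub hid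
        · intro x hx
          have := abs_le.mp (habs_bound x hx)
          linarith [this.1]
      have := hanti ha ht hat
      simp only [] at this
      linarith
  have hlip : ∀ a ∈ Set.Ici (0:ℝ), ∀ t ∈ Set.Ici (0:ℝ), |g t - g a| ≤ L*|t - a| := by
    intro a ha t ht
    rcases le_total a t with h | h
    · have h2 := hlip1 a ha t ht h
      rw [abs_of_nonneg (by linarith : (0:ℝ) ≤ t - a)]
      exact abs_le.mpr ⟨by linarith [h2.2], h2.1⟩
    · have h2 := hlip1 t ht a ha h
      rw [abs_sub_comm, abs_sub_comm t a, abs_of_nonneg (by linarith : (0:ℝ) ≤ a - t)]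
      exact abs_le.mpr ⟨by linarith [h2.2], h2.1⟩
  -- continuity of g
  have hcontg : ∀ t ∈ Set.Ici (0:ℝ), ContinuousAt g t := fun t ht => (hgd t ht).continuousAt
  have hcontOn : ContinuousOn g (Set.Ici (0:ℝ)) := fun t ht => (hcontg t ht).continuousWithinAt
  -- extension of g and its primitive
  set gt : ℝ → ℝ := fun s => g (max s 0) with hgtdef
  have hgteq : ∀ t, 0 ≤ t → gt t = g t := by
    intro t ht; rw [hgtdef]; simp only []; rw [max_eq_left ht]
  have hcontgt : Continuous gt := by
    rw [hgtdef, continuous_iff_continuousAt]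
    intro x
    exact ContinuousAt.comp (hcontg _ (Set.mem_Ici.mpr (le_max_right _ _)))
      ((continuous_id.max continuous_const).continuousAt)
  clear_value gt
  set G : ℝ → ℝ := fun x => ∫ s in (0:ℝ)..x, gt s with hGdef
  have hGd : ∀ x, HasDerivAt G (gt x) x := by
    intro x
    rw [hGdef]
    exact (hcontgt.integral_hasStrictDerivAt 0 x).hasDerivAt
  have hG0 : G 0 = 0 := by rw [hGdef]; simp
  have hGeq : ∀ T, 0 ≤ T → G T = ∫ s in (0:ℝ)..T, g s := by
    intro T hT
    rw [hGdef]
    apply intervalIntegral.integral_congr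
    intro x hx
    rw [Set.uIcc_of_le hT] at hx
    exact hgteq x hx.1
  clear_value G
  -- the decreasing energy functional V + c ∫ g
  have hFanti : AntitoneOn (fun t => V t + c*(G t)) (Set.Ici (0:ℝ)) := by
    apply antitoneOn_Ici_of_hasDerivAt (f' := fun t => Vd t + c*(gt t))
    · intro t ht
      exact (hVd t ht).add ((hGd t).const_mul c)
    · intro t ht
      have h1 := key t ht
      rw [hgteq t ht]
      linarith
  have hintbd : ∀ T, 0 ≤ T → (∫ s in (0:ℝ)..T, g s) ≤ V 0 / c := by
    intro T hT
    have h1 := hFanti Set.self_mem_Ici hT hT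
    simp only [hG0] at h1
    rw [← hGeq T hT, le_div_iff₀ hc]
    have h2 := hVnn T
    have h5 : G T * c = c * G T := mul_comm _ _
    have h6 : c * (0:ℝ) = 0 := mul_zero c
    linarith [h1]
  -- Barbalat
  have hgto : Tendsto g atTop (nhds 0) :=
    barbalat hL (fun t _ => hgnn t) hcontOn hlip hintbd
  -- conclusions via squeezing
  have habs3 : ∀ (f : ℝ → ℝ), (∀ t, f t^2 ≤ g t) → Tendsto f atTop (nhds 0) := by
    intro f hf
    rw [tendsto_zero_iff_abs_tendsto_zero]
    have h1 : Tendsto (fun t => Real.sqrt (g t)) atTop (nhds 0) := by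
      have h2 := hgto.sqrt
      simpa using h2
    refine tendsto_of_tendsto_of_tendsto_of_le_of_le tendsto_const_nhds h1
      (fun t => abs_nonneg _) (fun t => ?_)
    simp only [Function.comp_apply]
    rw [← Real.sqrt_sq_eq_abs]
    exact Real.sqrt_le_sqrt (hf t)
  have hωto : Tendsto ω atTop (nhds 0) := by
    apply habs3
    intro t
    simp only [hgdef]
    linarith [sq_nonneg (Real.sin (θ t - θt)), sq_nonneg (p t)]
  have hSto : Tendsto (fun t => Real.sin (θ t - θt)) atTop (nhds 0) := by
    apply habs3
    intro t
    simp only [hgdef]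
    linarith [sq_nonneg (ω t), sq_nonneg (p t)]
  have hpto : Tendsto p atTop (nhds 0) := by
    apply habs3
    intro t
    simp only [hgdef]
    linarith [sq_nonneg (ω t), sq_nonneg (Real.sin (θ t - θt))]
  refine ⟨hωto, ?_, hSto⟩
  have h2 := hpto.add (hωto.const_mul kI)
  have h3 : (fun t => kI * uI t - w * Real.sin (θ t)) = fun t => p t + kI * ω t := by
    funext t
    simp only [hpdef]
    ring
  rw [h3]
  simpa using h2
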